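/- Let M̃ be an (ε,0)-CCA credit-attributing next-token predictor, S a dataset, s_i ∈ S, and x₀ a prompt. For any trace w = ((x₁, C'₁), …, (x_n, C'_n)) of token–credit-set pairs with s_i ∉ C'₁ ∪ … ∪ C'_n, let P(w) = ∏_{j=1}^n M̃(S, x₀∥x₁∥…∥x_{j−1})((x_j, C'_j)) be the probability that the crediting rollout on (S, x₀) produces exactly the trace w, and let Q(w) be the analogous trace probability on (S∖{s_i}, x₀). Then P(w) ≥ e^{−εn} · Q(w) · ∏_{j=1}^{n} Pr_{(t,C')∼M̃(S, x₀∥x₁∥…∥x_{j−1})}[s_i ∉ C']. -/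

import Mathlib

open scoped ENNReal Classical

noncomputable section

namespace CCA

variable {α X D Y : Type*}

/-- Conditional probability of an event `E` given event `B`, for a set function `P`. -/
def prCond (P : Set α → ℝ≥0∞) (B : Set α) : Set α → ℝ≥0∞ := fun E => P (E ∩ B) / P B

/-- `(ε,δ)`-closeness of two set functions, as in differential privacy. -/
def Close (ε δ : ℝ) (P Q : Set α → ℝ≥0∞) : Prop :=
  ∀ E : Set α,
    P E ≤ ENNReal.ofReal (Real.exp ε) * Q E + ENNReal.ofReal δ ∧
    Q E ≤ ENNReal.ofReal (Real.exp ε) * P E + ENNReal.ofReal δ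

/-- `(ε,δ)`-counterfactual credit attribution for a kernel `K` mapping a dataset `S` and a
prompt `x` to a (sub)probability set function over (output, credit set) pairs: for every
prompt, dataset and `s ∈ S`, either `s` is credited with probability `1`, or the conditional
distribution given `s` not credited is `(ε,δ)`-close to the counterfactual on `S \ {s}`. -/
def IsCCA (ε δ : ℝ) (K : Set D → List X → Set (Y × Set D) → ℝ≥0∞) : Prop :=
  ∀ (S : Set D) (x : List X) (s : D), s ∈ S →
    K S x {q | s ∈ q.2} = 1 ∨
    Close ε δ (prCond (K S x) {q | s ∉ q.2}) (K (S \ {s}) x)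

/-- The event kernel associated with a PMF-valued crediting algorithm. -/
def pmfKernel (M : Set D → List X → PMF (Y × Set D)) :
    Set D → List X → Set (Y × Set D) → ℝ≥0∞ :=
  fun S x E => (M S x).toOuterMeasure E

/-- Probability that the crediting rollout of `M` on current prompt `x` produces exactly the
trace `w` of (token, credit set) pairs. -/
def traceProb (M : Set D → List X → PMF (X × Set D)) (S : Set D) :
    List X → List (X × Set D) → ℝ≥0∞
  | _, [] => 1
  | x, q :: w => M S x q * traceProb M S (x ++ [q.1]) w

/-- A terminal trace: the last generated token is `bot` and no earlier token is `bot`. -/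
def IsTerminal (bot : X) (w : List (X × Set D)) : Prop :=
  (w.map Prod.fst).getLast? = some bot ∧ ∀ y ∈ (w.map Prod.fst).dropLast, y ≠ bot

/-- The union of the credit sets appearing along a trace. -/
def creditOf (w : List (X × Set D)) : Set D := w.foldr (fun q acc => q.2 ∪ acc) ∅

/-- Probability that the crediting rollout of `M` on `(S, x0)` outputs the
(generated string, credit set) pair `o`. -/
def rolloutProb (bot : X) (M : Set D → List X → PMF (X × Set D)) (S : Set D)
    (x0 : List X) (o : List X × Set D) : ℝ≥0∞ :=
  ∑' w : {w : List (X × Set D) //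
      IsTerminal bot w ∧ x0 ++ w.map Prod.fst = o.1 ∧ creditOf w = o.2},
    traceProb M S x0 w.1

/-- Event kernel of the crediting rollout of `M`. -/
def rolloutK (bot : X) (M : Set D → List X → PMF (X × Set D)) :
    Set D → List X → Set (List X × Set D) → ℝ≥0∞ :=
  fun S x0 E => ∑' o : E, rolloutProb bot M S x0 ↑o

lemma pmf_compl {α : Type*} (p : PMF α) (E : Set α) : p.toOuterMeasure E + p.toOuterMeasure Eᶜ = 1 := by
  rw [PMF.toOuterMeasure_apply, PMF.toOuterMeasure_apply, ← Summable.tsum_add ENNReal.summable ENNReal.summable]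
  simp only [Set.indicator_self_add_compl_apply]
  exact p.tsum_coe

lemma key_step {X D : Type*} (M : Set D → List X → PMF (X × Set D)) (ε : ℝ)
    (hM : IsCCA ε 0 (pmfKernel M)) (S : Set D) (s : D) (hs : s ∈ S) (x0 : List X)
    (q : X × Set D) (hq : s ∉ q.2) :
    ENNReal.ofReal (Real.exp (-ε)) * M (S \ {s}) x0 q *
      (M S x0).toOuterMeasure {p : X × Set D | s ∉ p.2} ≤ M S x0 q := by
  set B : Set (X × Set D) := {p | s ∉ p.2} with hB
  rcases hM S x0 s hs with h1 | h2
  · have hc : ({q : X × Set D | s ∈ q.2} : Set (X × Set D))ᶜ = B := by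
      ext p; simp [hB]
    have := pmf_compl (M S x0) {q : X × Set D | s ∈ q.2}
    rw [hc] at this
    have h1' : (M S x0).toOuterMeasure {q : X × Set D | s ∈ q.2} = 1 := h1
    rw [h1'] at this
    have hz : (M S x0).toOuterMeasure B = 0 := by
      have := (ENNReal.add_right_inj (by norm_num)).mp (this.trans (add_zero 1).symm)
      exact this
    rw [hz, mul_zero]
    exact zero_le
  · have h := (h2 {q}).2
    simp only [ENNReal.ofReal_zero, add_zero, prCond, pmfKernel] at h
    have hqB : ({q} : Set (X × Set D)) ∩ B = {q} := by
      rw [Set.inter_eq_self_of_subset_left]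
      intro p hp; simp at hp; subst hp; exact hq
    rw [hqB, PMF.toOuterMeasure_apply_singleton, PMF.toOuterMeasure_apply_singleton] at h
    calc ENNReal.ofReal (Real.exp (-ε)) * M (S \ {s}) x0 q * (M S x0).toOuterMeasure B
        ≤ ENNReal.ofReal (Real.exp (-ε)) *
            (ENNReal.ofReal (Real.exp ε) * (M S x0 q / (M S x0).toOuterMeasure B)) *
            (M S x0).toOuterMeasure B := by gcongr
      _ = (ENNReal.ofReal (Real.exp (-ε)) * ENNReal.ofReal (Real.exp ε)) *
            ((M S x0).toOuterMeasure B * (M S x0 q / (M S x0).toOuterMeasure B)) := by ring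
      _ ≤ 1 * M S x0 q := by
          apply mul_le_mul'
          · rw [← ENNReal.ofReal_mul (Real.exp_nonneg _), ← Real.exp_add]
            simp
          · exact ENNReal.mul_div_le
      _ = M S x0 q := one_mul _

/-- Trace inequality: if `M` is `(ε,0)`-CCA, `s ∈ S`, and the trace `w` never credits `s`,
then `P(w) ≥ e^{-ε n} · Q(w) · ∏_{j<n} Pr_{M(S, prompt_j)}[s not credited]`, where `P`, `Q`
are the trace probabilities of the crediting rollout on `S` resp. `S \ {s}`. -/
theorem stmt4 {X D : Type*} (M : Set D → List X → PMF (X × Set D)) (ε : ℝ)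
    (hM : IsCCA ε 0 (pmfKernel M))
    (S : Set D) (s : D) (hs : s ∈ S) (x0 : List X)
    (w : List (X × Set D)) (hw : s ∉ creditOf w) :
    traceProb M S x0 w ≥
      ENNReal.ofReal (Real.exp (-(ε * (w.length : ℝ)))) * traceProb M (S \ {s}) x0 w *
        ∏ j ∈ Finset.range w.length,
          (M S (x0 ++ (w.take j).map Prod.fst)).toOuterMeasure {q : X × Set D | s ∉ q.2} := by
  induction w generalizing x0 with
  | nil => simp [traceProb]
  | cons q w ih =>
    have hw' : s ∉ q.2 ∧ s ∉ creditOf w := by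
      have : creditOf (q :: w) = q.2 ∪ creditOf w := rfl
      rw [this, Set.mem_union] at hw
      push_neg at hw; exact hw
    have IH := ih (x0 ++ [q.1]) hw'.2
    have hkey := key_step M ε hM S s hs x0 q hw'.1
    rw [ge_iff_le]
    have hexp : ENNReal.ofReal (Real.exp (-(ε * ((q :: w).length : ℝ)))) =
        ENNReal.ofReal (Real.exp (-ε)) * ENNReal.ofReal (Real.exp (-(ε * (w.length : ℝ)))) := by
      rw [← ENNReal.ofReal_mul (Real.exp_nonneg _), ← Real.exp_add]
      congr 2
      push_cast [List.length_cons]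
      ring
    simp only [List.length_cons]
    rw [Finset.prod_range_succ']
    simp only [List.take_succ_cons, List.map_cons, List.take_zero, List.map_nil,
      List.append_nil, List.length_cons]
    push_cast
    have hpr : ∀ j, x0 ++ q.1 :: (w.take j).map Prod.fst =
        (x0 ++ [q.1]) ++ (w.take j).map Prod.fst := by simp
    calc ENNReal.ofReal (Real.exp (-(ε * ((w.length : ℝ) + 1)))) *
          traceProb M (S \ {s}) x0 (q :: w) *
          ((∏ j ∈ Finset.range w.length,
            (M S (x0 ++ q.1 :: (w.take j).map Prod.fst)).toOuterMeasure {p : X × Set D | s ∉ p.2}) *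
           (M S x0).toOuterMeasure {p : X × Set D | s ∉ p.2})
        = (ENNReal.ofReal (Real.exp (-ε)) * M (S \ {s}) x0 q *
            (M S x0).toOuterMeasure {p : X × Set D | s ∉ p.2}) *
          (ENNReal.ofReal (Real.exp (-(ε * (w.length : ℝ)))) *
            traceProb M (S \ {s}) (x0 ++ [q.1]) w *
            ∏ j ∈ Finset.range w.length,
              (M S ((x0 ++ [q.1]) ++ (w.take j).map Prod.fst)).toOuterMeasure
                {p : X × Set D | s ∉ p.2}) := by
          simp_rw [hpr]
          rw [show traceProb M (S \ {s}) x0 (q :: w) =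
            M (S \ {s}) x0 q * traceProb M (S \ {s}) (x0 ++ [q.1]) w from rfl]
          rw [show ((w.length : ℝ) + 1) = (((q :: w).length : ℝ)) by simp, hexp]
          ring
      _ ≤ M S x0 q * traceProb M S (x0 ++ [q.1]) w := mul_le_mul' hkey IH
      _ = traceProb M S x0 (q :: w) := rfl

end CCA
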